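/- arXiv:0802.1571 — 2 statements merged into one kernel-verified Lean document; each statement's English description precedes it below -/
import Mathlib

section
/- Let X be a finite n-dimensional simplicial complex satisfying condition (1_X), equipped with a type function t : V → {0,1,…,n} such that the vertices of every simplex of X have pairwise distinct types (equivalently, every n-simplex has exactly one vertex of each type). Let R ∈ ℝ, let f ∈ C^0(X) satisfy Δf = c·f for some real c, and for each α ∈ {0,…,n} define f_α ∈ C^0(X) by f_α(v) = R·f(v) if t(v) = α and f_α(v) = f(v) otherwise. Then Σ_{α=0}^{n} (Δ f_α, f_α) = [(n−c)·(R−1)² + c·(R² + n)]·(f, f). -/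
open Finset

open scoped Classical

variable {V : Type*}

/-- A (finite) simplicial complex on the vertex type `V`: a collection of nonempty
finite sets of vertices (the simplices) closed under passing to nonempty subsets. -/
def IsComplex [DecidableEq V] (K : Finset (Finset V)) : Prop :=
  (∀ s ∈ K, s.Nonempty) ∧ ∀ s ∈ K, ∀ t : Finset V, t ⊆ s → t.Nonempty → t ∈ K

/-- `K` is `n`-dimensional and satisfies condition `(1_X)`: every simplex has dimension
at most `n` and is a face of some `n`-dimensional simplex (one of cardinality `n+1`). -/
def IsPureDim [DecidableEq V] (K : Finset (Finset V)) (n : ℕ) : Prop :=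
  (∀ s ∈ K, s.card ≤ n + 1) ∧ ∀ s ∈ K, ∃ t ∈ K, s ⊆ t ∧ t.card = n + 1

/-- `wt K n s` : the number `w(s)` of `n`-dimensional simplices of `K` containing `s`. -/
noncomputable def wt [DecidableEq V] (K : Finset (Finset V)) (n : ℕ) (s : Finset V) : ℕ :=
  (K.filter fun t => s ⊆ t ∧ t.card = n + 1).card

/-- An `m`-tuple of vertices is allowed when its entries are distinct and form a simplex
of `K`; i.e. it is an oriented `(m-1)`-simplex of `K`. -/
def Allowed [DecidableEq V] [Fintype V] (K : Finset (Finset V)) {m : ℕ}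
    (v : Fin m → V) : Prop :=
  Function.Injective v ∧ Finset.image v Finset.univ ∈ K

/-- `f` is an `(m-1)`-cochain on `K`: a real-valued alternating function on oriented
`(m-1)`-simplices of `K` (realized as a function on all `m`-tuples of vertices which is
alternating and vanishes on tuples which are not oriented simplices of `K`). -/
def IsCochain [DecidableEq V] [Fintype V] (K : Finset (Finset V)) (m : ℕ)
    (f : (Fin m → V) → ℝ) : Prop :=
  (∀ (σ : Equiv.Perm (Fin m)) (v : Fin m → V),
      f (v ∘ σ) = ((Equiv.Perm.sign σ : ℤ) : ℝ) * f v) ∧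
  ∀ v : Fin m → V, ¬ Allowed K v → f v = 0

/-- The inner product `(f,g) = ∑_s w(s)·f(s)·g(s)` on `(m-1)`-cochains, the sum being over
the unoriented `(m-1)`-simplices `s` of `K` (each with an arbitrarily chosen orientation);
summing over all `m`-tuples counts each simplex `m!` times, whence the normalization. -/
noncomputable def innerC [DecidableEq V] [Fintype V] (K : Finset (Finset V)) (n m : ℕ)
    (f g : (Fin m → V) → ℝ) : ℝ :=
  (∑ v : Fin m → V, (wt K n (Finset.image v Finset.univ) : ℝ) * f v * g v) /
    (Nat.factorial m : ℝ)

/-- The coboundary `d : C^{m-1}(K) → C^m(K)`. -/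
noncomputable def cobound [DecidableEq V] [Fintype V] (K : Finset (Finset V)) {m : ℕ}
    (f : (Fin m → V) → ℝ) : (Fin (m + 1) → V) → ℝ :=
  fun v => if Allowed K v then
    ∑ j : Fin (m + 1), (-1 : ℝ) ^ (j : ℕ) * f (v ∘ Fin.succAbove j)
  else 0

/-- The operator `δ : C^m(K) → C^{m-1}(K)`,
`(δf)(s) = ∑_x (w([x,s])/w(s))·f([x,s])`, the sum being over the vertices `x`
such that `[x,s]` is an oriented simplex of `K`. -/
noncomputable def codiff [DecidableEq V] [Fintype V] (K : Finset (Finset V)) (n : ℕ) {m : ℕ}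
    (f : (Fin (m + 1) → V) → ℝ) : (Fin m → V) → ℝ :=
  fun s => ∑ x : V,
    if Allowed K (Fin.cons x s) then
      ((wt K n (Finset.image (Fin.cons x s) Finset.univ) : ℝ) /
          (wt K n (Finset.image s Finset.univ) : ℝ)) * f (Fin.cons x s)
    else 0

/-- The Laplace operator `Δ = δ ∘ d` on `(m-1)`-cochains. -/
noncomputable def lap [DecidableEq V] [Fintype V] (K : Finset (Finset V)) (n : ℕ) {m : ℕ}
    (f : (Fin m → V) → ℝ) : (Fin m → V) → ℝ :=
  codiff K n (cobound K f)

/-- `ρ_v : C^{m-1}(K) → C^{m-1}(K)`: `(ρ_v f)(s) = f(s)` if `v` is a vertex of `s`,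
and `0` otherwise. -/
noncomputable def rho [DecidableEq V] {m : ℕ} (v : V) (f : (Fin m → V) → ℝ) :
    (Fin m → V) → ℝ :=
  fun s => if ∃ j, s j = v then f s else 0

/-- The vertices of `K`. -/
noncomputable def verts [DecidableEq V] [Fintype V] (K : Finset (Finset V)) : Finset V :=
  Finset.univ.filter fun v => {v} ∈ K

/-- The link `Lk(v)` of a vertex `v`: all simplices `s` of `K` with `v ∉ s` and
`s ∪ {v} ∈ K`. -/
noncomputable def linkK [DecidableEq V] (K : Finset (Finset V)) (v : V) :
    Finset (Finset V) :=
  K.filter fun s => v ∉ s ∧ insert v s ∈ K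

/-- `τ_v : C^{m}(K) → C^{m-1}(Lk(v))`: `(τ_v f)(s) = f([v,s])` for `s` an oriented
simplex of the link `Lk(v)`. -/
noncomputable def tau [DecidableEq V] [Fintype V] (K : Finset (Finset V)) (v : V) {m : ℕ}
    (f : (Fin (m + 1) → V) → ℝ) : (Fin m → V) → ℝ :=
  fun s => if Allowed (linkK K v) s then f (Fin.cons v s) else 0

/-- `c` is an eigenvalue of the Laplace operator acting on `(m-1)`-cochains of `K`. -/
def IsEigen [DecidableEq V] [Fintype V] (K : Finset (Finset V)) (n m : ℕ) (c : ℝ) : Prop :=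
  ∃ f : (Fin m → V) → ℝ, f ≠ 0 ∧ IsCochain K m f ∧ lap K n f = c • f

set_option linter.unusedSectionVars false

section Aux

variable [Fintype V] [DecidableEq V] (K : Finset (Finset V)) (n : ℕ)

lemma image_fin1 (s : Fin 1 → V) : Finset.image s Finset.univ = {s 0} := by
  ext y; simp [Fin.exists_fin_one, eq_comm]

lemma image_cons_fin1 (x : V) (s : Fin 1 → V) :
    Finset.image (Fin.cons x s : Fin 2 → V) Finset.univ = {x, s 0} := by
  have hc1 : (Fin.cons x s : Fin 2 → V) 1 = s 0 := rfl
  ext y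
  simp [Fin.exists_fin_two, hc1, eq_comm]

lemma inj_cons_fin1 (x : V) (s : Fin 1 → V) :
    Function.Injective (Fin.cons x s : Fin 2 → V) ↔ x ≠ s 0 := by
  rw [Fin.cons_injective_iff]
  constructor
  · rintro ⟨hx, -⟩ h
    exact hx ⟨0, h.symm⟩
  · intro h
    refine ⟨?_, Function.injective_of_subsingleton s⟩
    rintro ⟨i, hi⟩
    have : i = 0 := Subsingleton.elim _ _
    exact h (this ▸ hi).symm

lemma allowed_cons_iff (x : V) (s : Fin 1 → V) :
    Allowed K (Fin.cons x s) ↔ x ≠ s 0 ∧ ({x, s 0} : Finset V) ∈ K := by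
  unfold Allowed
  rw [image_cons_fin1, inj_cons_fin1]

lemma wt_zero (hc : IsComplex K) {s : Finset V} (hs : s.Nonempty) (h : s ∉ K) :
    wt K n s = 0 := by
  rw [wt, Finset.card_eq_zero, Finset.filter_eq_empty_iff]
  rintro T hT ⟨hsub, -⟩
  exact h (hc.2 T hT s hsub hs)

lemma wt_pair_le (x v : V) : wt K n {x, v} ≤ wt K n ({v} : Finset V) := by
  apply Finset.card_le_card
  intro T hT
  simp only [Finset.mem_filter] at hT ⊢
  refine ⟨hT.1, ?_, hT.2.2⟩
  intro y hy
  simp only [Finset.mem_singleton] at hy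
  exact hT.2.1 (by simp [hy])

lemma lap_apply (g : (Fin 1 → V) → ℝ) (s : Fin 1 → V) :
    lap K n g s = ∑ x : V, if Allowed K (Fin.cons x s) then
      (wt K n {x, s 0} : ℝ) / (wt K n ({s 0} : Finset V) : ℝ) * (g s - g (fun _ => x))
      else 0 := by
  unfold lap codiff cobound
  apply Finset.sum_congr rfl
  intro x _
  by_cases hA : Allowed K (Fin.cons x s)
  · rw [if_pos hA, if_pos hA, if_pos hA, image_cons_fin1, image_fin1]
    congr 1
    rw [Fin.sum_univ_two]
    have h0 : (Fin.cons x s : Fin 2 → V) ∘ Fin.succAbove 0 = s := by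
      funext i
      simp [Fin.succAbove_zero]
    have h1 : (Fin.cons x s : Fin 2 → V) ∘ Fin.succAbove 1 = fun _ => x := by
      funext i
      have : i = 0 := Subsingleton.elim _ _
      subst this
      rfl
    rw [h0, h1]
    norm_num
    ring
  · rw [if_neg hA, if_neg hA]

lemma count_aux (hc : IsComplex K) (v : V) :
    ∑ x : V, (if x ≠ v ∧ ({x, v} : Finset V) ∈ K then wt K n {x, v} else 0)
      = n * wt K n ({v} : Finset V) := by
  have step1 : ∀ x : V, (if x ≠ v ∧ ({x, v} : Finset V) ∈ K then wt K n {x, v} else 0)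
      = if x ≠ v then wt K n {x, v} else 0 := by
    intro x
    by_cases h1 : x ≠ v
    · by_cases h2 : ({x, v} : Finset V) ∈ K
      · simp [h1, h2]
      · simp [h1, h2, wt_zero K n hc (by simp) h2]
    · simp [h1]
  simp_rw [step1]
  have hwt : ∀ s : Finset V, wt K n s = ∑ T ∈ K, if s ⊆ T ∧ T.card = n + 1 then 1 else 0 := by
    intro s; rw [wt, Finset.card_filter]
  simp_rw [hwt]
  have step2 : ∀ x : V,
      (if x ≠ v then (∑ T ∈ K, if ({x, v} : Finset V) ⊆ T ∧ T.card = n + 1 then 1 else 0) else 0)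
      = ∑ T ∈ K, if x ≠ v ∧ (({x, v} : Finset V) ⊆ T ∧ T.card = n + 1) then 1 else 0 := by
    intro x; by_cases h : x ≠ v <;> simp [h]
  simp_rw [step2]
  rw [Finset.sum_comm, Finset.mul_sum]
  apply Finset.sum_congr rfl
  intro T hT
  by_cases hvT : v ∈ T ∧ T.card = n + 1
  · obtain ⟨hv, hcard⟩ := hvT
    have key : ∀ x : V, (if x ≠ v ∧ (({x, v} : Finset V) ⊆ T ∧ T.card = n + 1) then (1:ℕ) else 0)
        = if x ∈ T.erase v then 1 else 0 := by
      intro x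
      refine if_congr ?_ rfl rfl
      simp [Finset.mem_erase, Finset.insert_subset_iff, hv, hcard, and_comm]
    simp_rw [key]
    rw [Finset.sum_ite_mem, Finset.univ_inter, Finset.sum_const, smul_eq_mul, mul_one,
      Finset.card_erase_of_mem hv, hcard]
    simp [hv, hcard, Finset.singleton_subset_iff]
  · have key : ∀ x : V,
        (if x ≠ v ∧ (({x, v} : Finset V) ⊆ T ∧ T.card = n + 1) then (1:ℕ) else 0) = 0 := by
      intro x
      rw [if_neg]
      rintro ⟨-, hsub, hcard⟩
      exact hvT ⟨hsub (by simp), hcard⟩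
    simp_rw [key]
    rw [Finset.sum_const_zero]
    rw [if_neg, mul_zero]
    rintro ⟨hsub, hcard⟩
    exact hvT ⟨hsub (by simp), hcard⟩

lemma count_real (hc : IsComplex K) (v : V) :
    ∑ x : V, (if x ≠ v ∧ ({x, v} : Finset V) ∈ K then (wt K n {x, v} : ℝ) else 0)
      = (n : ℝ) * (wt K n ({v} : Finset V) : ℝ) := by
  have h := congrArg (Nat.cast : ℕ → ℝ) (count_aux K n hc v)
  simpa [apply_ite (Nat.cast : ℕ → ℝ)] using h

lemma inner_expand (g h : (Fin 1 → V) → ℝ) :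
    innerC K n 1 g h = ∑ s : Fin 1 → V, (wt K n ({s 0} : Finset V) : ℝ) * g s * h s := by
  unfold innerC
  simp [image_fin1, Nat.factorial]

lemma lap_inner (hc : IsComplex K) (g : (Fin 1 → V) → ℝ) :
    innerC K n 1 (lap K n g) g =
      ∑ s : Fin 1 → V, ∑ x : V,
        (if x ≠ s 0 ∧ ({x, s 0} : Finset V) ∈ K then
          (wt K n {x, s 0} : ℝ) * (g s * g s - g (fun _ => x) * g s) else 0) := by
  rw [inner_expand]
  apply Finset.sum_congr rfl
  intro s _
  rw [lap_apply]
  have hdist : (wt K n ({s 0} : Finset V) : ℝ) *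
      (∑ x : V, if Allowed K (Fin.cons x s) then
        (wt K n {x, s 0} : ℝ) / (wt K n ({s 0} : Finset V) : ℝ) * (g s - g (fun _ => x))
        else 0) * g s
      = ∑ x : V, (wt K n ({s 0} : Finset V) : ℝ) *
        (if Allowed K (Fin.cons x s) then
          (wt K n {x, s 0} : ℝ) / (wt K n ({s 0} : Finset V) : ℝ) * (g s - g (fun _ => x))
          else 0) * g s := by
    rw [Finset.mul_sum, Finset.sum_mul]
  rw [hdist]
  apply Finset.sum_congr rfl
  intro x _
  by_cases hA : x ≠ s 0 ∧ ({x, s 0} : Finset V) ∈ K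
  · rw [if_pos ((allowed_cons_iff K x s).mpr hA), if_pos hA]
    by_cases hw : (wt K n ({s 0} : Finset V) : ℝ) = 0
    · have h0 : wt K n ({s 0} : Finset V) = 0 := by exact_mod_cast hw
      have h2 : wt K n ({x, s 0} : Finset V) = 0 := by
        have := wt_pair_le K n x (s 0)
        omega
      rw [h2]
      simp [hw]
    · field_simp
  · rw [if_neg (fun h => hA ((allowed_cons_iff K x s).mp h)), if_neg hA, mul_zero, zero_mul]

lemma sum_r_sq (R : ℝ) (a : Fin (n + 1)) :
    ∑ α : Fin (n + 1), (if a = α then R else 1) * (if a = α then R else 1)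
      = R ^ 2 + n := by
  have h : ∀ α : Fin (n + 1), (if a = α then R else 1) * (if a = α then R else 1)
      = (if a = α then R ^ 2 - 1 else 0) + 1 := by
    intro α; split_ifs <;> ring
  simp_rw [h]
  rw [Finset.sum_add_distrib, Finset.sum_ite_eq, if_pos (Finset.mem_univ a),
    Finset.sum_const, Finset.card_univ, Fintype.card_fin]
  push_cast
  ring

lemma sum_r_mul (R : ℝ) {a b : Fin (n + 1)} (hab : a ≠ b) :
    ∑ α : Fin (n + 1), (if a = α then R else 1) * (if b = α then R else 1)
      = 2 * R + n - 1 := by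
  have h : ∀ α : Fin (n + 1), (if a = α then R else 1) * (if b = α then R else 1)
      = (if a = α then R - 1 else 0) + ((if b = α then R - 1 else 0) + 1) := by
    intro α
    by_cases h1 : a = α <;> by_cases h2 : b = α
    · exact absurd (h1.trans h2.symm) hab
    · simp [h1, h2]
    · simp [h1, h2]
    · simp [h1, h2]
  simp_rw [h]
  rw [Finset.sum_add_distrib, Finset.sum_add_distrib, Finset.sum_ite_eq, Finset.sum_ite_eq,
    if_pos (Finset.mem_univ a), if_pos (Finset.mem_univ b), Finset.sum_const,
    Finset.card_univ, Fintype.card_fin]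
  push_cast
  ring

end Aux

/-- for a type function `t : V → {0,…,n}` (vertices of every simplex have
pairwise distinct types), `R ∈ ℝ`, and `f ∈ C^0(X)` with `Δf = c·f`, setting
`f_α(v) = R·f(v)` if `t(v) = α` and `f_α(v) = f(v)` otherwise, one has
`∑_α (Δf_α, f_α) = ((n-c)·(R-1)² + c·(R²+n))·(f,f)`. -/
theorem sum_over_types_identity
    [Fintype V] [DecidableEq V] (K : Finset (Finset V)) (n : ℕ)
    (hcplx : IsComplex K) (hpure : IsPureDim K n)
    (t : V → Fin (n + 1)) (ht : ∀ s ∈ K, Set.InjOn t (s : Set V))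
    (R c : ℝ) (f : (Fin 1 → V) → ℝ) (hf : IsCochain K 1 f)
    (heig : lap K n f = c • f) :
    ∑ α : Fin (n + 1),
        innerC K n 1 (lap K n (fun s => if t (s 0) = α then R * f s else f s))
          (fun s => if t (s 0) = α then R * f s else f s)
      = (((n : ℝ) - c) * (R - 1) ^ 2 + c * (R ^ 2 + (n : ℝ))) * innerC K n 1 f f := by
  classical
  have hT1 : (∑ s : Fin 1 → V, ∑ x : V,
      if x ≠ s 0 ∧ ({x, s 0} : Finset V) ∈ K then
        (wt K n {x, s 0} : ℝ) * (f s * f s) else 0)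
      = (n : ℝ) * innerC K n 1 f f := by
    rw [inner_expand, Finset.mul_sum]
    apply Finset.sum_congr rfl
    intro s _
    have h : ∀ x : V, (if x ≠ s 0 ∧ ({x, s 0} : Finset V) ∈ K then
        (wt K n {x, s 0} : ℝ) * (f s * f s) else 0)
        = (if x ≠ s 0 ∧ ({x, s 0} : Finset V) ∈ K then
            (wt K n {x, s 0} : ℝ) else 0) * (f s * f s) := by
      intro x; split_ifs <;> simp
    simp_rw [h]
    rw [← Finset.sum_mul, count_real K n hcplx]
    ring
  have hlapf : innerC K n 1 (lap K n f) f = c * innerC K n 1 f f := by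
    rw [heig, inner_expand, inner_expand, Finset.mul_sum]
    apply Finset.sum_congr rfl
    intro s _
    simp only [Pi.smul_apply, smul_eq_mul]
    ring
  have hdiff : (∑ s : Fin 1 → V, ∑ x : V,
      if x ≠ s 0 ∧ ({x, s 0} : Finset V) ∈ K then
        (wt K n {x, s 0} : ℝ) * (f s * f s) else 0)
      - (∑ s : Fin 1 → V, ∑ x : V,
      if x ≠ s 0 ∧ ({x, s 0} : Finset V) ∈ K then
        (wt K n {x, s 0} : ℝ) * (f (fun _ => x) * f s) else 0)
      = c * innerC K n 1 f f := by
    rw [← hlapf, lap_inner K n hcplx f, ← Finset.sum_sub_distrib]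
    apply Finset.sum_congr rfl
    intro s _
    rw [← Finset.sum_sub_distrib]
    apply Finset.sum_congr rfl
    intro x _
    split_ifs <;> ring
  have hT2 : (∑ s : Fin 1 → V, ∑ x : V,
      if x ≠ s 0 ∧ ({x, s 0} : Finset V) ∈ K then
        (wt K n {x, s 0} : ℝ) * (f (fun _ => x) * f s) else 0)
      = ((n : ℝ) - c) * innerC K n 1 f f := by
    have h2 : ((n : ℝ) - c) * innerC K n 1 f f
        = (n : ℝ) * innerC K n 1 f f - c * innerC K n 1 f f := by ring
    rw [h2, ← hT1, ← hdiff]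
    ring
  have key : ∀ (s : Fin 1 → V) (x : V),
      (∑ α : Fin (n + 1), if x ≠ s 0 ∧ ({x, s 0} : Finset V) ∈ K then
        (wt K n {x, s 0} : ℝ) *
          ((if t (s 0) = α then R * f s else f s) * (if t (s 0) = α then R * f s else f s)
            - (if t x = α then R * f (fun _ => x) else f (fun _ => x)) *
              (if t (s 0) = α then R * f s else f s)) else 0)
      = if x ≠ s 0 ∧ ({x, s 0} : Finset V) ∈ K then
          (wt K n {x, s 0} : ℝ) * ((R ^ 2 + (n : ℝ)) * (f s * f s)
            - (2 * R + (n : ℝ) - 1) * (f (fun _ => x) * f s)) else 0 := by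
    intro s x
    by_cases hA : x ≠ s 0 ∧ ({x, s 0} : Finset V) ∈ K
    · simp only [if_pos hA]
      have hne : t x ≠ t (s 0) := by
        intro h
        exact hA.1 (ht _ hA.2 (by simp) (by simp) h)
      have h1 : ∀ α : Fin (n + 1), (if t (s 0) = α then R * f s else f s)
          = (if t (s 0) = α then R else 1) * f s := by
        intro α; split_ifs <;> ring
      have h2 : ∀ α : Fin (n + 1),
          (if t x = α then R * f (fun _ => x) else f (fun _ => x))
          = (if t x = α then R else 1) * f (fun _ => x) := by
        intro α; split_ifs <;> ring
      simp only [h1, h2]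
      have e : ∀ α : Fin (n + 1),
          (wt K n {x, s 0} : ℝ) *
            (((if t (s 0) = α then R else 1) * f s) * ((if t (s 0) = α then R else 1) * f s)
              - ((if t x = α then R else 1) * f (fun _ => x)) *
                ((if t (s 0) = α then R else 1) * f s))
          = ((wt K n {x, s 0} : ℝ) * (f s * f s)) *
              ((if t (s 0) = α then R else 1) * (if t (s 0) = α then R else 1))
            - ((wt K n {x, s 0} : ℝ) * (f (fun _ => x) * f s)) *
              ((if t x = α then R else 1) * (if t (s 0) = α then R else 1)) := by
        intro α; ring
      simp_rw [e]
      rw [Finset.sum_sub_distrib, ← Finset.mul_sum, ← Finset.mul_sum,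
        sum_r_sq n R (t (s 0)), sum_r_mul n R hne]
      ring
    · simp only [if_neg hA, Finset.sum_const_zero]
  calc
    ∑ α : Fin (n + 1),
        innerC K n 1 (lap K n (fun s => if t (s 0) = α then R * f s else f s))
          (fun s => if t (s 0) = α then R * f s else f s)
      = ∑ α : Fin (n + 1), ∑ s : Fin 1 → V, ∑ x : V,
          (if x ≠ s 0 ∧ ({x, s 0} : Finset V) ∈ K then
            (wt K n {x, s 0} : ℝ) *
              ((if t (s 0) = α then R * f s else f s) * (if t (s 0) = α then R * f s else f s)
                - (if t x = α then R * f (fun _ => x) else f (fun _ => x)) *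
                  (if t (s 0) = α then R * f s else f s)) else 0) := by
        apply Finset.sum_congr rfl
        intro α _
        rw [lap_inner K n hcplx]
    _ = ∑ s : Fin 1 → V, ∑ x : V, ∑ α : Fin (n + 1),
          (if x ≠ s 0 ∧ ({x, s 0} : Finset V) ∈ K then
            (wt K n {x, s 0} : ℝ) *
              ((if t (s 0) = α then R * f s else f s) * (if t (s 0) = α then R * f s else f s)
                - (if t x = α then R * f (fun _ => x) else f (fun _ => x)) *
                  (if t (s 0) = α then R * f s else f s)) else 0) := by
        rw [Finset.sum_comm]
        apply Finset.sum_congr rfl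
        intro s _
        rw [Finset.sum_comm]
    _ = ∑ s : Fin 1 → V, ∑ x : V,
          (if x ≠ s 0 ∧ ({x, s 0} : Finset V) ∈ K then
            (wt K n {x, s 0} : ℝ) * ((R ^ 2 + (n : ℝ)) * (f s * f s)
              - (2 * R + (n : ℝ) - 1) * (f (fun _ => x) * f s)) else 0) := by
        apply Finset.sum_congr rfl
        intro s _
        apply Finset.sum_congr rfl
        intro x _
        exact key s x
    _ = (R ^ 2 + (n : ℝ)) * (∑ s : Fin 1 → V, ∑ x : V,
          if x ≠ s 0 ∧ ({x, s 0} : Finset V) ∈ K then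
            (wt K n {x, s 0} : ℝ) * (f s * f s) else 0)
        - (2 * R + (n : ℝ) - 1) * (∑ s : Fin 1 → V, ∑ x : V,
          if x ≠ s 0 ∧ ({x, s 0} : Finset V) ∈ K then
            (wt K n {x, s 0} : ℝ) * (f (fun _ => x) * f s) else 0) := by
        rw [Finset.mul_sum, Finset.mul_sum, ← Finset.sum_sub_distrib]
        apply Finset.sum_congr rfl
        intro s _
        rw [Finset.mul_sum, Finset.mul_sum, ← Finset.sum_sub_distrib]
        apply Finset.sum_congr rfl
        intro x _
        split_ifs <;> ring
    _ = (((n : ℝ) - c) * (R - 1) ^ 2 + c * (R ^ 2 + (n : ℝ))) * innerC K n 1 f f := by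
        rw [hT1, hT2]
        ring
end

section
/- For every prime power q, every integer ℓ ≥ 1, and every 0 ≤ i ≤ ℓ−1, the number ℓ+1 is an eigenvalue of the Laplace operator Δ acting on C^i(𝔅_{ℓ,q}), i.e., there exists a nonzero f ∈ C^i(𝔅_{ℓ,q}) with Δf = (ℓ+1)·f. -/
open Finset

open scoped Classical

variable {V : Type*}

/-- The building `𝔅_{ℓ,q}` of `SL_{ℓ+2}(𝔽_q)` (with `q = |F|`): the flag complex whose
vertices are the nonzero proper `F`-linear subspaces of `F^{ℓ+2}` and whose simplices
are the nonempty finite sets of such subspaces which are totally ordered by inclusion. -/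
noncomputable def buildingK (F : Type*) [Field F] [Fintype F] (ℓ : ℕ)
    [Fintype (Submodule F (Fin (ℓ + 2) → F))]
    [DecidableEq (Submodule F (Fin (ℓ + 2) → F))] :
    Finset (Finset (Submodule F (Fin (ℓ + 2) → F))) :=
  Finset.univ.filter fun s =>
    s.Nonempty ∧ (∀ W ∈ s, W ≠ ⊥ ∧ W ≠ ⊤) ∧ ∀ W ∈ s, ∀ U ∈ s, W ≤ U ∨ U ≤ W


/-! ### Auxiliary material for the proof -/

section GenericAux

lemma image_cons_univ [DecidableEq V] {m : ℕ} (x : V) (s : Fin m → V) :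
    Finset.image (Fin.cons x s : Fin (m + 1) → V) Finset.univ
      = insert x (Finset.image s Finset.univ) := by
  ext y
  simp only [Finset.mem_image, Finset.mem_insert, Finset.mem_univ, true_and]
  constructor
  · rintro ⟨a, rfl⟩
    refine Fin.cases ?_ (fun a' => ?_) a
    · exact Or.inl (by simp)
    · exact Or.inr ⟨a', by simp⟩
  · rintro (rfl | ⟨a, rfl⟩)
    · exact ⟨0, by simp⟩
    · exact ⟨a.succ, by simp⟩

lemma cons_comp_succAbove {m : ℕ} (x : V) (s : Fin (m + 1) → V) (j : Fin (m + 1)) :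
    (Fin.cons x s : Fin (m + 2) → V) ∘ (Fin.succAbove j.succ) =
      Fin.cons x (s ∘ Fin.succAbove j) := by
  funext a
  refine Fin.cases ?_ (fun a' => ?_) a
  · simp [Function.comp, Fin.succ_succAbove_zero]
  · simp [Function.comp, Fin.succ_succAbove_succ]

lemma image_comp_subset {m k : ℕ} [DecidableEq V] (v : Fin m → V) (g : Fin k → Fin m) :
    Finset.image (v ∘ g) Finset.univ ⊆ Finset.image v Finset.univ := by
  intro y hy
  rw [Finset.mem_image] at hy ⊢
  obtain ⟨a, -, rfl⟩ := hy
  exact ⟨g a, Finset.mem_univ _, rfl⟩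

lemma wt_anti [DecidableEq V] (K : Finset (Finset V)) (n : ℕ) {S S' : Finset V}
    (h : S ⊆ S') : wt K n S' ≤ wt K n S := by
  apply Finset.card_le_card
  intro t ht
  rw [Finset.mem_filter] at ht ⊢
  exact ⟨ht.1, h.trans ht.2.1, ht.2.2⟩

end GenericAux

section GdetSection

/-- Auxiliary matrix: row `0` is constant `1`, and for `j : Fin (i+1)` the row `j.succ`
is the indicator function of the value `c j` among `1, …, i+2`. -/
noncomputable def Gmat (i : ℕ) (c : Fin (i + 1) → ℕ) : Matrix (Fin (i + 2)) (Fin (i + 2)) ℝ :=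
  Matrix.of fun j k => Fin.cases (1 : ℝ) (fun j' => if c j' = (k : ℕ) + 1 then 1 else 0) j

noncomputable def Gdet (i : ℕ) (c : Fin (i + 1) → ℕ) : ℝ := (Gmat i c).det

lemma Gmat_zero (i : ℕ) (c : Fin (i + 1) → ℕ) (k : Fin (i + 2)) : Gmat i c 0 k = 1 := by
  simp [Gmat]

lemma Gmat_succ (i : ℕ) (c : Fin (i + 1) → ℕ) (j : Fin (i + 1)) (k : Fin (i + 2)) :
    Gmat i c j.succ k = if c j = (k : ℕ) + 1 then 1 else 0 := by
  simp [Gmat]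

lemma Gdet_comp (i : ℕ) (σ : Equiv.Perm (Fin (i + 1))) (c : Fin (i + 1) → ℕ) :
    Gdet i (c ∘ σ) = ((Equiv.Perm.sign σ : ℤ) : ℝ) * Gdet i c := by
  have hmat : Gmat i (c ∘ σ) =
      (Gmat i c).submatrix (Equiv.Perm.decomposeFin.symm (0, σ)) id := by
    ext j k
    refine Fin.cases ?_ (fun j' => ?_) j
    · simp [Gmat, Matrix.submatrix_apply]
    · simp [Gmat, Matrix.submatrix_apply]
  rw [Gdet, hmat, Matrix.det_permute, Gdet]
  simp

lemma Gdet_sum_Icc (i ℓ : ℕ) (hi : i + 1 ≤ ℓ) (c' : Fin i → ℕ) :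
    ∑ e ∈ Finset.Icc 1 (ℓ + 1), Gdet i (Fin.cons e c') = 0 := by
  classical
  set B : Fin (i + 2) → Fin (i + 2) → ℝ := Gmat i (Fin.cons 0 c') with hB
  have one_ne : (1 : Fin (i + 2)) ≠ 0 := by
    intro h
    have := congrArg Fin.val h
    simp at this
  have zero_ne : (0 : Fin (i + 2)) ≠ 1 := fun h => one_ne h.symm
  have hrow : ∀ e : ℕ, Gmat i (Fin.cons e c')
      = Function.update B 1 (fun k : Fin (i + 2) => if e = (k : ℕ) + 1 then (1 : ℝ) else 0) := by
    intro e
    funext j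
    refine Fin.cases ?_ (fun j' => ?_) j
    · rw [Function.update_of_ne zero_ne]
      funext k
      rw [Gmat_zero, hB, Gmat_zero]
    · refine Fin.cases ?_ (fun a => ?_) j'
      · have h1 : ((0 : Fin (i + 1)).succ) = (1 : Fin (i + 2)) := rfl
        rw [h1, Function.update_self]
        funext k
        rw [← h1, Gmat_succ]
        simp
      · have hne2 : (a.succ.succ : Fin (i + 2)) ≠ 1 := by
          intro h
          have := congrArg Fin.val h
          simp [Fin.val_succ] at this
        rw [Function.update_of_ne hne2]
        funext k
        rw [Gmat_succ, hB, Gmat_succ]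
        simp
  have key : ∑ e ∈ Finset.Icc 1 (ℓ + 1), Gdet i (Fin.cons e c')
      = Matrix.detRowAlternating.toMultilinearMap
          (Function.update B 1 (∑ e ∈ Finset.Icc 1 (ℓ + 1),
            fun k : Fin (i + 2) => if e = (k : ℕ) + 1 then (1 : ℝ) else 0)) := by
    rw [(Matrix.detRowAlternating.toMultilinearMap.map_update_sum (Finset.Icc 1 (ℓ + 1))
      (1 : Fin (i + 2)) _ B)]
    refine Finset.sum_congr rfl fun e _ => ?_
    rw [Gdet, hrow e]
    rfl
  rw [key]
  have hones : (∑ e ∈ Finset.Icc 1 (ℓ + 1),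
      fun k : Fin (i + 2) => if e = (k : ℕ) + 1 then (1 : ℝ) else 0)
      = fun _ : Fin (i + 2) => (1 : ℝ) := by
    funext k
    rw [Finset.sum_apply]
    rw [Finset.sum_ite_eq' (Finset.Icc 1 (ℓ + 1)) ((k : ℕ) + 1) (fun _ => (1 : ℝ))]
    rw [if_pos]
    rw [Finset.mem_Icc]
    have := k.isLt
    omega
  rw [hones]
  have h01 : (Function.update B 1 (fun _ : Fin (i + 2) => (1 : ℝ))) 0
      = (Function.update B 1 (fun _ : Fin (i + 2) => (1 : ℝ))) 1 := by
    rw [Function.update_of_ne zero_ne, Function.update_self]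
    funext k
    rw [hB, Gmat_zero]
  exact Matrix.det_zero_of_row_eq zero_ne h01

lemma Gdet_repeat (i : ℕ) {c : Fin (i + 1) → ℕ} {a b : Fin (i + 1)} (hab : a ≠ b)
    (h : c a = c b) : Gdet i c = 0 := by
  refine Matrix.det_zero_of_row_eq (M := Gmat i c) (i := a.succ) (j := b.succ)
    (fun hs => hab (Fin.succ_injective _ hs)) ?_
  funext k
  rw [Gmat_succ, Gmat_succ, h]

lemma Gdet_cons_self (i : ℕ) (c : Fin (i + 1) → ℕ) (j : Fin (i + 1)) :
    Gdet i (Fin.cons (c j) (c ∘ Fin.succAbove j)) = (-1 : ℝ) ^ (j : ℕ) * Gdet i c := by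
  have h : (Fin.cons (c j) (c ∘ Fin.succAbove j) : Fin (i + 1) → ℕ)
      = c ∘ ⇑(j.cycleRange)⁻¹ := by
    funext a
    refine Fin.cases ?_ (fun a' => ?_) a
    · simp [Equiv.Perm.inv_def, Fin.cycleRange_symm_zero]
    · simp [Equiv.Perm.inv_def, Fin.cycleRange_symm_succ]
  rw [h, Gdet_comp]
  congr 1
  rw [Equiv.Perm.sign_inv, Fin.sign_cycleRange]
  push_cast
  ring

lemma Gdet_base (i : ℕ) : Gdet i (fun a : Fin (i + 1) => (a : ℕ) + 2) = 1 := by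
  rw [Gdet, Matrix.det_succ_column_zero]
  rw [Finset.sum_eq_single (0 : Fin (i + 2))]
  · have hsub : (Gmat i (fun a : Fin (i + 1) => (a : ℕ) + 2)).submatrix
        (Fin.succAbove 0) Fin.succ = 1 := by
      ext a b
      rw [Matrix.submatrix_apply, Fin.succAbove_zero, Gmat_succ, Matrix.one_apply]
      by_cases hab : a = b
      · subst hab; simp
      · rw [if_neg hab, if_neg]
        intro h
        apply hab
        apply Fin.ext
        have hb := congrArg Fin.val (rfl : b.succ = b.succ)
        simp only [Fin.val_succ] at h
        omega
    rw [hsub, Matrix.det_one, Gmat_zero]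
    simp
  · intro b _ hb
    obtain ⟨b', rfl⟩ : ∃ b' : Fin (i + 1), b'.succ = b := ⟨b.pred hb, Fin.succ_pred _ hb⟩
    rw [Gmat_succ]
    simp
  · intro h
    exact absurd (Finset.mem_univ _) h

end GdetSection

section BuildingAux

variable (F : Type*) [Field F] [Fintype F] (ℓ : ℕ)
  [Fintype (Submodule F (Fin (ℓ + 2) → F))]
  [DecidableEq (Submodule F (Fin (ℓ + 2) → F))]

/-- The dimension of a subspace. -/
noncomputable abbrev drk : Submodule F (Fin (ℓ + 2) → F) → ℕ := fun W => Module.finrank F W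

lemma mem_buildingK {s : Finset (Submodule F (Fin (ℓ + 2) → F))} :
    s ∈ buildingK F ℓ ↔
      s.Nonempty ∧ (∀ W ∈ s, W ≠ ⊥ ∧ W ≠ ⊤) ∧ ∀ W ∈ s, ∀ U ∈ s, W ≤ U ∨ U ≤ W := by
  simp [buildingK]

lemma building_down {t s : Finset (Submodule F (Fin (ℓ + 2) → F))}
    (ht : t ∈ buildingK F ℓ) (hsub : s ⊆ t) (hne : s.Nonempty) : s ∈ buildingK F ℓ := by
  rw [mem_buildingK] at ht ⊢
  exact ⟨hne, fun W hW => ht.2.1 W (hsub hW),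
    fun W hW U hU => ht.2.2 W (hsub hW) U (hsub hU)⟩

lemma top_flag_facts {t : Finset (Submodule F (Fin (ℓ + 2) → F))}
    (ht : t ∈ buildingK F ℓ) (hc : t.card = ℓ + 1) :
    Set.InjOn (drk F ℓ) ↑t ∧ Finset.image (drk F ℓ) t = Finset.Icc 1 (ℓ + 1) := by
  rw [mem_buildingK] at ht
  have hinj : Set.InjOn (drk F ℓ) ↑t := by
    intro W hW U hU h
    rcases ht.2.2 W hW U hU with hle | hle
    · exact Submodule.eq_of_le_of_finrank_le hle h.ge
    · exact (Submodule.eq_of_le_of_finrank_le hle h.le).symm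
  have hbounds : ∀ W ∈ t, drk F ℓ W ∈ Finset.Icc 1 (ℓ + 1) := by
    intro W hW
    obtain ⟨hbot, htop⟩ := ht.2.1 W hW
    rw [Finset.mem_Icc]
    constructor
    · rw [Nat.one_le_iff_ne_zero]
      intro h0
      exact hbot (Submodule.finrank_eq_zero.mp h0)
    · have hlt : drk F ℓ W < Module.finrank F (Fin (ℓ + 2) → F) :=
        Submodule.finrank_lt htop
      rw [Module.finrank_fin_fun] at hlt
      omega
  refine ⟨hinj, Finset.eq_of_subset_of_card_le ?_ ?_⟩
  · intro e he
    rw [Finset.mem_image] at he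
    obtain ⟨W, hW, rfl⟩ := he
    exact hbounds W hW
  · rw [Finset.card_image_of_injOn hinj, hc, Nat.card_Icc]
    omega

lemma allowed_tail {m : ℕ} {x : Submodule F (Fin (ℓ + 2) → F)}
    {s : Fin (m + 1) → Submodule F (Fin (ℓ + 2) → F)}
    (h : Allowed (buildingK F ℓ) (Fin.cons x s)) : Allowed (buildingK F ℓ) s := by
  constructor
  · intro a b hab
    have h2 : (Fin.cons x s : Fin (m + 2) → Submodule F (Fin (ℓ + 2) → F)) a.succ
        = (Fin.cons x s : Fin (m + 2) → Submodule F (Fin (ℓ + 2) → F)) b.succ := by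
      simpa using hab
    exact Fin.succ_injective _ (h.1 h2)
  · refine building_down F ℓ h.2 ?_ (Finset.image_nonempty.mpr Finset.univ_nonempty)
    intro y hy
    rw [Finset.mem_image] at hy ⊢
    obtain ⟨a, -, rfl⟩ := hy
    exact ⟨a.succ, Finset.mem_univ _, by simp⟩

lemma allowed_face {m : ℕ} {x : Submodule F (Fin (ℓ + 2) → F)}
    {s : Fin (m + 1) → Submodule F (Fin (ℓ + 2) → F)}
    (h : Allowed (buildingK F ℓ) (Fin.cons x s)) (j : Fin (m + 1)) :
    Allowed (buildingK F ℓ) (Fin.cons x (s ∘ Fin.succAbove j)) := by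
  rw [← cons_comp_succAbove]
  constructor
  · exact h.1.comp Fin.succAbove_right_injective
  · refine building_down F ℓ h.2 (image_comp_subset _ _)
      (Finset.image_nonempty.mpr Finset.univ_nonempty)

lemma count_sum {m : ℕ} (s : Fin m → Submodule F (Fin (ℓ + 2) → F))
    (hs : Allowed (buildingK F ℓ) s) (h : ℕ → ℝ) :
    (∑ x : Submodule F (Fin (ℓ + 2) → F),
        if Allowed (buildingK F ℓ) (Fin.cons x s)
        then (wt (buildingK F ℓ) ℓ (Finset.image (Fin.cons x s) Finset.univ) : ℝ)
          * h (drk F ℓ x)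
        else 0)
      = (wt (buildingK F ℓ) ℓ (Finset.image s Finset.univ) : ℝ) *
          ∑ e ∈ Finset.Icc 1 (ℓ + 1) \
              Finset.image (fun a => drk F ℓ (s a)) Finset.univ, h e := by
  classical
  have hSimg : (Finset.image s Finset.univ).image (drk F ℓ)
      = Finset.image (fun a => drk F ℓ (s a)) Finset.univ := by
    rw [Finset.image_image]
    rfl
  have stepA : ∀ x : Submodule F (Fin (ℓ + 2) → F),
      (if Allowed (buildingK F ℓ) (Fin.cons x s)
        then (wt (buildingK F ℓ) ℓ (Finset.image (Fin.cons x s) Finset.univ) : ℝ)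
          * h (drk F ℓ x) else 0)
      = ∑ t ∈ buildingK F ℓ,
          if (insert x (Finset.image s Finset.univ) ⊆ t ∧ t.card = ℓ + 1)
              ∧ Allowed (buildingK F ℓ) (Fin.cons x s)
          then h (drk F ℓ x) else 0 := by
    intro x
    by_cases hA : Allowed (buildingK F ℓ) (Fin.cons x s)
    · rw [if_pos hA]
      have hwt : (wt (buildingK F ℓ) ℓ (Finset.image (Fin.cons x s) Finset.univ) : ℝ)
          = ∑ t ∈ buildingK F ℓ,
              if insert x (Finset.image s Finset.univ) ⊆ t ∧ t.card = ℓ + 1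
              then (1 : ℝ) else 0 := by
        rw [wt, image_cons_univ, Finset.card_filter]
        push_cast
        rfl
      rw [hwt, Finset.sum_mul]
      refine Finset.sum_congr rfl fun t _ => ?_
      by_cases hP : insert x (Finset.image s Finset.univ) ⊆ t ∧ t.card = ℓ + 1 <;>
        simp [hP, hA]
    · rw [if_neg hA]
      exact (Finset.sum_eq_zero fun t _ => by simp [hA]).symm
  rw [Finset.sum_congr rfl fun x _ => stepA x, Finset.sum_comm]
  have stepB : ∀ t ∈ buildingK F ℓ,
      (∑ x : Submodule F (Fin (ℓ + 2) → F),
        if (insert x (Finset.image s Finset.univ) ⊆ t ∧ t.card = ℓ + 1)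
            ∧ Allowed (buildingK F ℓ) (Fin.cons x s)
        then h (drk F ℓ x) else 0)
      = if Finset.image s Finset.univ ⊆ t ∧ t.card = ℓ + 1
        then ∑ e ∈ Finset.Icc 1 (ℓ + 1) \
            Finset.image (fun a => drk F ℓ (s a)) Finset.univ, h e
        else 0 := by
    intro t htK
    by_cases hP : Finset.image s Finset.univ ⊆ t ∧ t.card = ℓ + 1
    · rw [if_pos hP]
      have hiff : ∀ x : Submodule F (Fin (ℓ + 2) → F),
          ((insert x (Finset.image s Finset.univ) ⊆ t ∧ t.card = ℓ + 1)
            ∧ Allowed (buildingK F ℓ) (Fin.cons x s))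
          ↔ x ∈ t \ Finset.image s Finset.univ := by
        intro x
        rw [Finset.mem_sdiff]
        constructor
        · rintro ⟨⟨hins, -⟩, hAx, -⟩
          refine ⟨hins (Finset.mem_insert_self _ _), fun hxS => ?_⟩
          rw [Finset.mem_image] at hxS
          obtain ⟨a, -, ha⟩ := hxS
          have heq : (Fin.cons x s : Fin (m + 1) → Submodule F (Fin (ℓ + 2) → F)) a.succ
              = (Fin.cons x s : Fin (m + 1) → Submodule F (Fin (ℓ + 2) → F)) 0 := by
            simp [ha]
          exact Fin.succ_ne_zero a (hAx heq)
        · rintro ⟨hxt, hxS⟩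
          have hxr : x ∉ Set.range s := by
            rintro ⟨a, rfl⟩
            exact hxS (Finset.mem_image_of_mem _ (Finset.mem_univ a))
          refine ⟨⟨Finset.insert_subset hxt hP.1, hP.2⟩, ?_, ?_⟩
          · exact Fin.cons_injective_iff.mpr ⟨hxr, hs.1⟩
          · rw [image_cons_univ]
            exact building_down F ℓ htK (Finset.insert_subset hxt hP.1)
              (Finset.insert_nonempty _ _)
      have h1 : (∑ x : Submodule F (Fin (ℓ + 2) → F),
          if (insert x (Finset.image s Finset.univ) ⊆ t ∧ t.card = ℓ + 1)
              ∧ Allowed (buildingK F ℓ) (Fin.cons x s)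
          then h (drk F ℓ x) else 0)
          = ∑ x ∈ t \ Finset.image s Finset.univ, h (drk F ℓ x) := by
        rw [Finset.sum_congr rfl fun x _ => if_congr (hiff x) rfl rfl]
        rw [Finset.sum_ite_mem, Finset.univ_inter]
      rw [h1]
      obtain ⟨hinj, himg⟩ := top_flag_facts F ℓ htK hP.2
      have hinj' : ∀ x ∈ t \ Finset.image s Finset.univ,
          ∀ y ∈ t \ Finset.image s Finset.univ, drk F ℓ x = drk F ℓ y → x = y := by
        intro x hx y hy hxy
        rw [Finset.mem_sdiff] at hx hy
        exact hinj hx.1 hy.1 hxy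
      rw [← Finset.sum_image hinj']
      congr 1
      rw [← hSimg]
      ext e
      constructor
      · intro he
        rw [Finset.mem_image] at he
        obtain ⟨x, hx, rfl⟩ := he
        rw [Finset.mem_sdiff] at hx
        rw [Finset.mem_sdiff]
        refine ⟨by rw [← himg]; exact Finset.mem_image_of_mem _ hx.1, ?_⟩
        intro hmem
        rw [Finset.mem_image] at hmem
        obtain ⟨y, hyS, hyx⟩ := hmem
        exact hx.2 (by rwa [hinj (hP.1 hyS) hx.1 hyx] at hyS)
      · intro he
        rw [Finset.mem_sdiff] at he
        obtain ⟨he1, he2⟩ := he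
        rw [← himg, Finset.mem_image] at he1
        obtain ⟨x, hxt, rfl⟩ := he1
        rw [Finset.mem_image]
        exact ⟨x, Finset.mem_sdiff.mpr ⟨hxt, fun hxS => he2 (Finset.mem_image_of_mem _ hxS)⟩, rfl⟩
    · rw [if_neg hP]
      refine Finset.sum_eq_zero fun x _ => ?_
      rw [if_neg]
      rintro ⟨⟨hins, hcard⟩, -⟩
      exact hP ⟨(Finset.subset_insert x _).trans hins, hcard⟩
  rw [Finset.sum_congr rfl stepB]
  have hfin : ∀ t : Finset (Submodule F (Fin (ℓ + 2) → F)),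
      (if Finset.image s Finset.univ ⊆ t ∧ t.card = ℓ + 1
        then ∑ e ∈ Finset.Icc 1 (ℓ + 1) \
            Finset.image (fun a => drk F ℓ (s a)) Finset.univ, h e else 0)
      = (if Finset.image s Finset.univ ⊆ t ∧ t.card = ℓ + 1 then (1 : ℝ) else 0) *
          ∑ e ∈ Finset.Icc 1 (ℓ + 1) \
            Finset.image (fun a => drk F ℓ (s a)) Finset.univ, h e := by
    intro t
    split_ifs <;> ring
  rw [Finset.sum_congr rfl fun t _ => hfin t, ← Finset.sum_mul]
  congr 1
  rw [wt, Finset.card_filter]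
  push_cast
  rfl

/-- The eigenfunction. -/
noncomputable def eigf (i : ℕ) : (Fin (i + 1) → Submodule F (Fin (ℓ + 2) → F)) → ℝ := fun v =>
  if Allowed (buildingK F ℓ) v ∧ wt (buildingK F ℓ) ℓ (Finset.image v Finset.univ) ≠ 0
  then Gdet i (fun a => drk F ℓ (v a)) else 0

end BuildingAux


section MainAux

variable (F : Type*) [Field F] [Fintype F] (ℓ : ℕ)
  [Fintype (Submodule F (Fin (ℓ + 2) → F))]
  [DecidableEq (Submodule F (Fin (ℓ + 2) → F))]

lemma eigf_isCochain (i : ℕ) : IsCochain (buildingK F ℓ) (i + 1) (eigf F ℓ i) := by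
  constructor
  · intro σ v
    have himgeq : Finset.image (v ∘ σ) Finset.univ = Finset.image v Finset.univ := by
      ext y
      simp only [Finset.mem_image, Finset.mem_univ, true_and, Function.comp_apply]
      constructor
      · rintro ⟨a, ha⟩
        exact ⟨σ a, ha⟩
      · rintro ⟨a, rfl⟩
        exact ⟨σ.symm a, by simp⟩
    have hAiff : Allowed (buildingK F ℓ) (v ∘ σ) ↔ Allowed (buildingK F ℓ) v := by
      unfold Allowed
      rw [himgeq, Equiv.injective_comp]
    by_cases hv : Allowed (buildingK F ℓ) v
        ∧ wt (buildingK F ℓ) ℓ (Finset.image v Finset.univ) ≠ 0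
    · have hv' : Allowed (buildingK F ℓ) (v ∘ σ)
          ∧ wt (buildingK F ℓ) ℓ (Finset.image (v ∘ σ) Finset.univ) ≠ 0 := by
        rw [himgeq, hAiff]
        exact hv
      simp only [eigf]
      rw [if_pos hv', if_pos hv]
      have hcc : (fun a => drk F ℓ ((v ∘ ⇑σ) a)) = (fun a => drk F ℓ (v a)) ∘ ⇑σ := rfl
      rw [hcc]
      exact Gdet_comp i σ _
    · have hv' : ¬(Allowed (buildingK F ℓ) (v ∘ σ)
          ∧ wt (buildingK F ℓ) ℓ (Finset.image (v ∘ σ) Finset.univ) ≠ 0) := by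
        rw [himgeq, hAiff]
        exact hv
      simp only [eigf]
      rw [if_neg hv', if_neg hv, mul_zero]
  · intro v hv
    simp only [eigf]
    exact if_neg fun h => hv h.1

lemma lap_eigf (i : ℕ) (hi : i + 1 ≤ ℓ) (s : Fin (i + 1) → Submodule F (Fin (ℓ + 2) → F)) :
    lap (buildingK F ℓ) ℓ (eigf F ℓ i) s = ((ℓ : ℝ) + 1) * eigf F ℓ i s := by
  classical
  have hlap : lap (buildingK F ℓ) ℓ (eigf F ℓ i) s
      = ∑ x : Submodule F (Fin (ℓ + 2) → F),
        if Allowed (buildingK F ℓ) (Fin.cons x s) then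
          ((wt (buildingK F ℓ) ℓ (Finset.image (Fin.cons x s) Finset.univ) : ℝ) /
            (wt (buildingK F ℓ) ℓ (Finset.image s Finset.univ) : ℝ)) *
              cobound (buildingK F ℓ) (eigf F ℓ i) (Fin.cons x s)
        else 0 := rfl
  by_cases h0 : Allowed (buildingK F ℓ) s
      ∧ wt (buildingK F ℓ) ℓ (Finset.image s Finset.univ) ≠ 0
  case neg =>
    have hfs : eigf F ℓ i s = 0 := by
      simp only [eigf]
      exact if_neg h0
    rw [hlap, hfs, mul_zero]
    refine Finset.sum_eq_zero fun x _ => ?_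
    by_cases hAx : Allowed (buildingK F ℓ) (Fin.cons x s)
    · rw [if_pos hAx]
      have hAs : Allowed (buildingK F ℓ) s := allowed_tail F ℓ hAx
      have hw : wt (buildingK F ℓ) ℓ (Finset.image s Finset.univ) = 0 := by
        by_contra hne
        exact h0 ⟨hAs, hne⟩
      have hsub : Finset.image s Finset.univ
          ⊆ Finset.image (Fin.cons x s) Finset.univ := by
        intro y hy
        rw [Finset.mem_image] at hy ⊢
        obtain ⟨a, -, rfl⟩ := hy
        exact ⟨a.succ, Finset.mem_univ _, by simp⟩
      have hwx : wt (buildingK F ℓ) ℓ (Finset.image (Fin.cons x s) Finset.univ) = 0 := by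
        have := wt_anti (buildingK F ℓ) ℓ hsub
        omega
      rw [hwx]
      norm_num
    · rw [if_neg hAx]
  case pos =>
    obtain ⟨hA, hw⟩ := h0
    have hfs : eigf F ℓ i s = Gdet i (fun a => drk F ℓ (s a)) := by
      simp only [eigf]
      exact if_pos ⟨hA, hw⟩
    have hws : ((wt (buildingK F ℓ) ℓ (Finset.image s Finset.univ) : ℝ)) ≠ 0 :=
      Nat.cast_ne_zero.mpr hw
    -- a top flag containing s
    have hex : (buildingK F ℓ |>.filter fun t =>
        Finset.image s Finset.univ ⊆ t ∧ t.card = ℓ + 1).Nonempty := by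
      rw [← Finset.card_pos]
      exact Nat.pos_of_ne_zero hw
    obtain ⟨t, ht⟩ := hex
    rw [Finset.mem_filter] at ht
    obtain ⟨htK, hSt, htc⟩ := ht
    obtain ⟨hinj, himg⟩ := top_flag_facts F ℓ htK htc
    have hst : ∀ a, s a ∈ t := fun a => hSt (Finset.mem_image_of_mem _ (Finset.mem_univ a))
    have hcinj : Function.Injective (fun a => drk F ℓ (s a)) := by
      intro a b hab
      exact hA.1 (hinj (hst a) (hst b) hab)
    have hcIcc : Finset.image (fun a => drk F ℓ (s a)) Finset.univ
        ⊆ Finset.Icc 1 (ℓ + 1) := by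
      intro e he
      rw [Finset.mem_image] at he
      obtain ⟨a, -, rfl⟩ := he
      rw [← himg]
      exact Finset.mem_image_of_mem _ (hst a)
    set H : ℕ → ℝ := fun e => Gdet i (fun a => drk F ℓ (s a)) +
      ∑ j : Fin (i + 1), (-1 : ℝ) ^ ((j : ℕ) + 1) *
        Gdet i (Fin.cons e ((fun a => drk F ℓ (s a)) ∘ Fin.succAbove j)) with hH
    have step1 : lap (buildingK F ℓ) ℓ (eigf F ℓ i) s
        = (1 / (wt (buildingK F ℓ) ℓ (Finset.image s Finset.univ) : ℝ)) *
          ∑ x : Submodule F (Fin (ℓ + 2) → F),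
            (if Allowed (buildingK F ℓ) (Fin.cons x s)
            then (wt (buildingK F ℓ) ℓ (Finset.image (Fin.cons x s) Finset.univ) : ℝ)
              * H (drk F ℓ x) else 0) := by
      rw [hlap, Finset.mul_sum]
      refine Finset.sum_congr rfl fun x _ => ?_
      by_cases hAx : Allowed (buildingK F ℓ) (Fin.cons x s)
      · rw [if_pos hAx, if_pos hAx]
        by_cases hwx : wt (buildingK F ℓ) ℓ
            (Finset.image (Fin.cons x s) Finset.univ) = 0
        · rw [hwx]
          push_cast
          ring
        · have hface : ∀ j : Fin (i + 1),
              eigf F ℓ i ((Fin.cons x s : Fin (i + 2) → _) ∘ Fin.succAbove j.succ)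
              = Gdet i (Fin.cons (drk F ℓ x)
                  ((fun a => drk F ℓ (s a)) ∘ Fin.succAbove j)) := by
            intro j
            rw [cons_comp_succAbove]
            have hAf : Allowed (buildingK F ℓ) (Fin.cons x (s ∘ Fin.succAbove j)) :=
              allowed_face F ℓ hAx j
            have hsubf : Finset.image (Fin.cons x (s ∘ Fin.succAbove j)) Finset.univ
                ⊆ Finset.image (Fin.cons x s) Finset.univ := by
              rw [← cons_comp_succAbove]
              exact image_comp_subset _ _
            have hwf : wt (buildingK F ℓ) ℓ
                (Finset.image (Fin.cons x (s ∘ Fin.succAbove j)) Finset.univ) ≠ 0 := by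
              intro hzz
              apply hwx
              have := wt_anti (buildingK F ℓ) ℓ hsubf
              omega
            have heq : eigf F ℓ i (Fin.cons x (s ∘ Fin.succAbove j))
                = Gdet i (fun a => drk F ℓ ((Fin.cons x (s ∘ Fin.succAbove j)
                    : Fin (i + 1) → Submodule F (Fin (ℓ + 2) → F)) a)) := by
              simp only [eigf]
              exact if_pos ⟨hAf, hwf⟩
            rw [heq]
            show Gdet i ((drk F ℓ) ∘ (Fin.cons x (s ∘ Fin.succAbove j))) = _
            rw [Fin.comp_cons]
            rfl
          have hcob : cobound (buildingK F ℓ) (eigf F ℓ i) (Fin.cons x s)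
              = H (drk F ℓ x) := by
            show (if Allowed (buildingK F ℓ) (Fin.cons x s) then
              ∑ j : Fin (i + 2), (-1 : ℝ) ^ (j : ℕ) *
                eigf F ℓ i ((Fin.cons x s : Fin (i + 2) → _) ∘ Fin.succAbove j)
              else 0) = H (drk F ℓ x)
            rw [if_pos hAx, Fin.sum_univ_succ, hH]
            congr 1
            · have h0 : (Fin.cons x s : Fin (i + 2) → Submodule F (Fin (ℓ + 2) → F))
                  ∘ Fin.succAbove 0 = s := by
                funext a
                simp [Fin.succAbove_zero]
              rw [h0]
              simp only [Fin.val_zero, pow_zero, one_mul]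
              rw [hfs]
            · refine Finset.sum_congr rfl fun j _ => ?_
              rw [hface j, Fin.val_succ]
          rw [hcob]
          ring
      · rw [if_neg hAx, if_neg hAx, mul_zero]
    rw [step1, count_sum F ℓ s hA H, hfs]
    have hsum : ∑ e ∈ Finset.Icc 1 (ℓ + 1) \
        Finset.image (fun a => drk F ℓ (s a)) Finset.univ, H e
        = ((ℓ : ℝ) + 1) * Gdet i (fun a => drk F ℓ (s a)) := by
      have hcard : (Finset.image (fun a => drk F ℓ (s a)) Finset.univ).card = i + 1 := by
        rw [Finset.card_image_of_injective _ hcinj, Finset.card_univ, Fintype.card_fin]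
      have hcardE : (Finset.Icc 1 (ℓ + 1) \
          Finset.image (fun a => drk F ℓ (s a)) Finset.univ).card = ℓ - i := by
        rw [Finset.card_sdiff_of_subset hcIcc, Nat.card_Icc, hcard]
        omega
      have hinner : ∀ j : Fin (i + 1),
          ∑ e ∈ Finset.Icc 1 (ℓ + 1) \
            Finset.image (fun a => drk F ℓ (s a)) Finset.univ,
              Gdet i (Fin.cons e ((fun a => drk F ℓ (s a)) ∘ Fin.succAbove j))
          = -((-1 : ℝ) ^ (j : ℕ) * Gdet i (fun a => drk F ℓ (s a))) := by
        intro j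
        rw [Finset.sum_sdiff_eq_sub hcIcc, Gdet_sum_Icc i ℓ hi]
        have himgsum : ∑ e ∈ Finset.image (fun a => drk F ℓ (s a)) Finset.univ,
            Gdet i (Fin.cons e ((fun a => drk F ℓ (s a)) ∘ Fin.succAbove j))
            = (-1 : ℝ) ^ (j : ℕ) * Gdet i (fun a => drk F ℓ (s a)) := by
          rw [Finset.sum_image (fun a _ b _ hab => hcinj hab)]
          rw [Finset.sum_eq_single j]
          · exact Gdet_cons_self i (fun a => drk F ℓ (s a)) j
          · intro b _ hbj
            obtain ⟨k, hk⟩ := Fin.exists_succAbove_eq hbj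
            refine Gdet_repeat i (a := (0 : Fin (i + 1))) (b := k.succ)
              (fun hzz => (Fin.succ_ne_zero k) hzz.symm) ?_
            show (Fin.cons (drk F ℓ (s b))
                ((fun a => drk F ℓ (s a)) ∘ Fin.succAbove j) : Fin (i + 1) → ℕ) 0
              = (Fin.cons (drk F ℓ (s b))
                ((fun a => drk F ℓ (s a)) ∘ Fin.succAbove j) : Fin (i + 1) → ℕ) k.succ
            rw [Fin.cons_zero, Fin.cons_succ]
            simp [hk]
          · intro hj
            exact absurd (Finset.mem_univ _) hj
        rw [himgsum]
        ring
      calc ∑ e ∈ Finset.Icc 1 (ℓ + 1) \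
            Finset.image (fun a => drk F ℓ (s a)) Finset.univ, H e
          = ∑ e ∈ Finset.Icc 1 (ℓ + 1) \
              Finset.image (fun a => drk F ℓ (s a)) Finset.univ,
              Gdet i (fun a => drk F ℓ (s a))
            + ∑ j : Fin (i + 1), (-1 : ℝ) ^ ((j : ℕ) + 1) *
              ∑ e ∈ Finset.Icc 1 (ℓ + 1) \
                Finset.image (fun a => drk F ℓ (s a)) Finset.univ,
                Gdet i (Fin.cons e ((fun a => drk F ℓ (s a)) ∘ Fin.succAbove j)) := by
            rw [hH, Finset.sum_add_distrib]
            congr 1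
            rw [Finset.sum_comm]
            refine Finset.sum_congr rfl fun j _ => ?_
            rw [Finset.mul_sum]
        _ = ((ℓ - i : ℕ) : ℝ) * Gdet i (fun a => drk F ℓ (s a))
            + ∑ j : Fin (i + 1), Gdet i (fun a => drk F ℓ (s a)) := by
            rw [Finset.sum_const, hcardE, nsmul_eq_mul]
            congr 1
            refine Finset.sum_congr rfl fun j _ => ?_
            rw [hinner j]
            have h2 : (-1 : ℝ) ^ (j : ℕ) * (-1 : ℝ) ^ (j : ℕ) = 1 := by
              rw [← mul_pow]
              norm_num
            rw [pow_succ]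
            linear_combination (Gdet i (fun a => drk F ℓ (s a))) * h2
        _ = ((ℓ : ℝ) + 1) * Gdet i (fun a => drk F ℓ (s a)) := by
            rw [Finset.sum_const, Finset.card_univ, Fintype.card_fin, nsmul_eq_mul,
              Nat.cast_sub (by omega)]
            push_cast
            ring
    rw [hsum]
    field_simp

/-- The standard flag. -/
noncomputable def Uflag (k : Fin (ℓ + 2)) : Submodule F (Fin (ℓ + 2) → F) :=
  Submodule.span F (Set.range fun a : Fin (k : ℕ) =>
    Pi.basisFun F (Fin (ℓ + 2)) (Fin.castLE k.isLt.le a))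

lemma Uflag_finrank (k : Fin (ℓ + 2)) : Module.finrank F (Uflag F ℓ k) = k := by
  have hli : LinearIndependent F (fun a : Fin (k : ℕ) =>
      Pi.basisFun F (Fin (ℓ + 2)) (Fin.castLE k.isLt.le a)) :=
    ((Pi.basisFun F (Fin (ℓ + 2))).linearIndependent).comp _ (Fin.castLE_injective _)
  rw [Uflag, finrank_span_eq_card hli, Fintype.card_fin]

lemma Uflag_mono {k k' : Fin (ℓ + 2)} (h : k ≤ k') : Uflag F ℓ k ≤ Uflag F ℓ k' := by
  apply Submodule.span_mono
  rintro _ ⟨a, rfl⟩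
  exact ⟨⟨(a : ℕ), lt_of_lt_of_le a.isLt h⟩, rfl⟩

lemma eigf_ne_zero (i : ℕ) (hi : i + 1 ≤ ℓ) : eigf F ℓ i ≠ 0 := by
  classical
  set Tf : Fin (ℓ + 1) → Submodule F (Fin (ℓ + 2) → F) := fun a => Uflag F ℓ a.succ with hTf
  have hTrk : ∀ a, drk F ℓ (Tf a) = (a : ℕ) + 1 := by
    intro a
    show Module.finrank F (Uflag F ℓ a.succ) = (a : ℕ) + 1
    rw [Uflag_finrank]
    simp
  have hTinj : Function.Injective Tf := by
    intro a b hab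
    have h2 := congrArg (drk F ℓ) hab
    rw [hTrk, hTrk] at h2
    exact Fin.ext (by omega)
  set T0 := Finset.image Tf Finset.univ with hT0
  have hT0K : T0 ∈ buildingK F ℓ := by
    rw [mem_buildingK]
    refine ⟨Finset.image_nonempty.mpr Finset.univ_nonempty, ?_, ?_⟩
    · intro W hW
      rw [hT0, Finset.mem_image] at hW
      obtain ⟨a, -, rfl⟩ := hW
      constructor
      · intro hbot
        have h2 := hTrk a
        rw [hbot] at h2
        rw [show drk F ℓ (⊥ : Submodule F (Fin (ℓ + 2) → F)) = 0 from finrank_bot F _] at h2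
        omega
      · intro htop
        have h2 := hTrk a
        rw [htop] at h2
        have h3 : drk F ℓ (⊤ : Submodule F (Fin (ℓ + 2) → F)) = ℓ + 2 := by
          show Module.finrank F (⊤ : Submodule F (Fin (ℓ + 2) → F)) = ℓ + 2
          rw [finrank_top, Module.finrank_fin_fun]
        rw [h3] at h2
        have := a.isLt
        omega
    · intro W hW U hU
      rw [hT0, Finset.mem_image] at hW hU
      obtain ⟨a, -, rfl⟩ := hW
      obtain ⟨b, -, rfl⟩ := hU
      rcases le_total a b with hab | hab
      · exact Or.inl (Uflag_mono F ℓ (Fin.succ_le_succ_iff.mpr hab))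
      · exact Or.inr (Uflag_mono F ℓ (Fin.succ_le_succ_iff.mpr hab))
  have hT0card : T0.card = ℓ + 1 := by
    rw [hT0, Finset.card_image_of_injective _ hTinj, Finset.card_univ, Fintype.card_fin]
  set s0 : Fin (i + 1) → Submodule F (Fin (ℓ + 2) → F) :=
    fun a => Tf ⟨(a : ℕ) + 1, by have := a.isLt; omega⟩ with hs0
  have hs0rk : ∀ a : Fin (i + 1), drk F ℓ (s0 a) = (a : ℕ) + 2 := by
    intro a
    simp only [hs0]
    rw [hTrk]
  have hs0sub : Finset.image s0 Finset.univ ⊆ T0 := by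
    intro y hy
    rw [Finset.mem_image] at hy
    obtain ⟨a, -, rfl⟩ := hy
    rw [hT0]
    exact Finset.mem_image_of_mem _ (Finset.mem_univ _)
  have hA0 : Allowed (buildingK F ℓ) s0 := by
    constructor
    · intro a b hab
      have h2 := congrArg (drk F ℓ) hab
      rw [hs0rk, hs0rk] at h2
      exact Fin.ext (by omega)
    · exact building_down F ℓ hT0K hs0sub (Finset.image_nonempty.mpr Finset.univ_nonempty)
  have hw0 : wt (buildingK F ℓ) ℓ (Finset.image s0 Finset.univ) ≠ 0 := by
    have hmem : T0 ∈ (buildingK F ℓ).filter fun t =>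
        Finset.image s0 Finset.univ ⊆ t ∧ t.card = ℓ + 1 :=
      Finset.mem_filter.mpr ⟨hT0K, hs0sub, hT0card⟩
    rw [wt]
    intro h0
    rw [Finset.card_eq_zero] at h0
    rw [h0] at hmem
    exact Finset.notMem_empty _ hmem
  intro hzero
  have hval : eigf F ℓ i s0 = 1 := by
    simp only [eigf]
    rw [if_pos ⟨hA0, hw0⟩]
    have h2 : (fun a => drk F ℓ (s0 a)) = (fun a : Fin (i + 1) => (a : ℕ) + 2) :=
      funext hs0rk
    rw [h2, Gdet_base]
  rw [hzero] at hval
  simp at hval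

end MainAux

/-- for every finite field `F` (of prime power order `q`), `ℓ ≥ 1` and
`0 ≤ i ≤ ℓ-1`, the number `ℓ+1` is an eigenvalue of the Laplace operator `Δ` acting on
`C^i(𝔅_{ℓ,q})`: there is a nonzero `f ∈ C^i(𝔅_{ℓ,q})` with `Δf = (ℓ+1)·f`. -/
theorem building_top_eigenvalue_exists
    (F : Type*) [Field F] [Fintype F] (ℓ : ℕ) (hℓ : 1 ≤ ℓ)
    [Fintype (Submodule F (Fin (ℓ + 2) → F))]
    [DecidableEq (Submodule F (Fin (ℓ + 2) → F))]
    (i : ℕ) (hi : i + 1 ≤ ℓ) :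
    ∃ f : (Fin (i + 1) → Submodule F (Fin (ℓ + 2) → F)) → ℝ,
      f ≠ 0 ∧ IsCochain (buildingK F ℓ) (i + 1) f ∧
        lap (buildingK F ℓ) ℓ f = ((ℓ : ℝ) + 1) • f := by
  refine ⟨eigf F ℓ i, eigf_ne_zero F ℓ i hi, eigf_isCochain F ℓ i, ?_⟩
  funext s
  rw [Pi.smul_apply, smul_eq_mul, lap_eigf F ℓ i hi s]
end
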